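/- Fix an integer n ≥ 2 and set m = n(n−1)/2. Let HM_n^k(ℕ) denote the set of n×n matrices with entries in ℕ that are symmetric, have all diagonal entries zero, have the Monge property, and whose entries sum to 2k. Then the limit as k → ∞ of #HM_n^k(ℕ) · (m−1)! · sf(n−1)^2 / k^{m−1} equals 1, where sf(n) = Π_{i=1}^n i! is the superfactorial. -/

import Mathlib

open Finset Filter

/-- The Monge property for an `n × n` matrix with `ℕ` entries (indices are 0-based). -/
def IsMongeNat {n : ℕ} (C : Matrix (Fin n) (Fin n) ℕ) : Prop :=
  ∀ i I j J : Fin n, i < I → j < J → C i j + C I J ≤ C i J + C I j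

/-- The superfactorial `sf n = 1! · 2! · ⋯ · n!`. -/
def sf (n : ℕ) : ℕ := ∏ i ∈ Finset.Icc 1 n, Nat.factorial i

/-- `HMk n k`: hollow symmetric `n × n` Monge matrices over `ℕ` whose entries sum
to `2k`. -/
def HMk (n k : ℕ) : Set (Matrix (Fin n) (Fin n) ℕ) :=
  {C | C.IsSymm ∧ (∀ i, C i i = 0) ∧ IsMongeNat C ∧ (∑ i, ∑ j, C i j) = 2 * k}


/- ### Auxiliary development -/

lemma ncard_sum_eq (ι : Type) [Fintype ι] [DecidableEq ι] (N : ℕ) :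
    Nat.card {y : ι → ℕ // ∑ i, y i = N} = (Fintype.card ι + N - 1).choose N := by
  have hcoe : Nat.card {y : ι → ℕ // ∑ i, y i = N}
      = ({y : ι → ℕ | ∑ i, y i = N} : Set (ι → ℕ)).ncard :=
    Nat.card_coe_set_eq _
  have hset : {y : ι → ℕ | ∑ i, y i = N} = ↑(Finset.piAntidiag (univ : Finset ι) N) := by
    ext f; simp
  rw [hcoe, hset, Set.ncard_coe_finset, ← Finset.map_sym_eq_piAntidiag, Finset.card_map,
    Finset.sym_univ, Finset.card_univ, Sym.card_sym_eq_choose]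

lemma ncard_sum_le (ι : Type) [Fintype ι] [DecidableEq ι] (N : ℕ) :
    (Nat.card {y : ι → ℕ // ∑ i, y i ≤ N})
      = (N + Fintype.card ι).choose (Fintype.card ι) := by
  have hequiv : {y : ι → ℕ // ∑ i, y i ≤ N} ≃ {z : Option ι → ℕ // ∑ o, z o = N} :=
    { toFun := fun y => ⟨fun o => o.elim (N - ∑ i, y.1 i) y.1, by
        have := y.2
        rw [Fintype.sum_option]
        simpa using by omega⟩
      invFun := fun z => ⟨fun i => z.1 (some i), by
        have := z.2; rw [Fintype.sum_option] at this
        show ∑ i, z.1 (some i) ≤ N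
        omega⟩
      left_inv := fun y => Subtype.ext (funext fun i => rfl)
      right_inv := fun z => Subtype.ext (funext fun o => by
        have := z.2; rw [Fintype.sum_option] at this
        cases o with
        | none =>
          show N - ∑ i, z.1 (some i) = z.1 none
          omega
        | some i => rfl) }
  rw [Nat.card_congr hequiv, ncard_sum_eq]
  rw [Fintype.card_option]
  have h1 : Fintype.card ι + 1 + N - 1 = N + Fintype.card ι := by omega
  rw [h1, Nat.choose_symm_add]

lemma choose_asymp (c d : ℕ) (hcd : d ≤ c) :
    Tendsto (fun k : ℕ => (((k + c).choose d : ℝ) * (Nat.factorial d)) / (k:ℝ)^d)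
      atTop (nhds 1) := by
  have hfun : ∀ k : ℕ, 1 ≤ k → (∏ i ∈ range d, (((k + (c - i) : ℕ) : ℝ) / (k : ℝ)))
      = (((k + c).choose d : ℝ) * (Nat.factorial d)) / (k:ℝ)^d := by
    intro k hk
    have h1 : ((k + c).choose d) * (Nat.factorial d) = (k + c).descFactorial d := by
      rw [Nat.descFactorial_eq_factorial_mul_choose]; ring
    have h2 : (k + c).descFactorial d = ∏ i ∈ range d, (k + (c - i)) := by
      rw [Nat.descFactorial_eq_prod_range]
      refine Finset.prod_congr rfl fun i hi => ?_
      have : i ≤ c := le_trans (le_of_lt (mem_range.mp hi)) hcd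
      omega
    rw [Finset.prod_div_distrib, Finset.prod_const, card_range, ← Nat.cast_prod, ← h2, ← h1]
    push_cast
    ring
  have hlim : Tendsto (fun k : ℕ => ∏ i ∈ range d, (((k + (c - i) : ℕ) : ℝ) / (k : ℝ)))
      atTop (nhds 1) := by
    have : (1:ℝ) = ∏ _i ∈ range d, (1:ℝ) := by simp
    rw [this]
    refine tendsto_finset_prod _ fun i _ => ?_
    have h1 : Tendsto (fun k : ℕ => 1 + ((c - i : ℕ) : ℝ) / (k : ℝ)) atTop (nhds (1 + 0)) :=
      tendsto_const_nhds.add (tendsto_const_div_atTop_nhds_zero_nat _)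
    rw [add_zero] at h1
    refine h1.congr' ?_
    filter_upwards [eventually_ge_atTop 1] with k hk
    have hk0 : (k:ℝ) ≠ 0 := by positivity
    push_cast
    field_simp
  exact hlim.congr' (by filter_upwards [eventually_ge_atTop 1] with k hk using hfun k hk)

section
variable {ι : Type} [Fintype ι] [DecidableEq ι]

omit [DecidableEq ι] in
lemma finite_sum_le (N : ℕ) : Finite {y : ι → ℕ // ∑ i, y i ≤ N} := by
  refine Finite.of_injective (fun y => (fun i => (⟨y.1 i, ?_⟩ : Fin (N+1)))) ?_
  · have h1 : y.1 i ≤ ∑ j, y.1 j := Finset.single_le_sum (fun j _ => Nat.zero_le _) (mem_univ i)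
    have := y.2; omega
  · intro a b hab
    ext i
    exact congrArg Fin.val (congrFun hab i)

lemma count_asymptotic (e : ι → ℕ) (he : ∀ i, 0 < e i) (i0 : ι) (hi0 : e i0 = 1) :
    Tendsto (fun k : ℕ =>
      (Nat.card {s : ι → ℕ // ∑ i, e i * s i = k} : ℝ)
        * (Nat.factorial (Fintype.card ι - 1)) * ((∏ i, e i : ℕ) : ℝ) /
        (k:ℝ) ^ (Fintype.card ι - 1)) atTop (nhds 1) := by
  have hcard : Fintype.card ι - 1 = Fintype.card {i : ι // i ≠ i0} := by
    rw [Fintype.card_subtype_compl (· = i0), Fintype.card_subtype_eq]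
  set ι' := {i : ι // i ≠ i0} with hι'
  set d := Fintype.card ι' with hd
  set E := ∑ i : ι', (e i.1 - 1) with hE
  set P' := ∏ i : ι', e i.1 with hP'
  have herase : ∀ (f : ι → ℕ), ∏ i : ι', f i.1 = ∏ i ∈ univ.erase i0, f i := by
    intro f
    rw [Finset.prod_subtype (p := fun i => i ≠ i0) (univ.erase i0) (fun i => by simp) f]
  have hProd : ∏ i, e i = P' := by
    rw [hP', herase e, ← Finset.mul_prod_erase univ e (mem_univ i0), hi0, one_mul]
  have hsum : ∀ (s : ι → ℕ), ∑ i, e i * s i = s i0 + ∑ i : ι', e i.1 * s i.1 := by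
    intro s
    rw [← Finset.add_sum_erase univ (fun i => e i * s i) (mem_univ i0), hi0, one_mul]
    congr 1
    rw [Finset.sum_subtype (p := fun i => i ≠ i0) (univ.erase i0) (fun i => by simp)
      (fun i => e i * s i)]
  -- step 1 : equality count = inequality count
  have hFB : ∀ k, Nat.card {s : ι → ℕ // ∑ i, e i * s i = k}
      = Nat.card {t : ι' → ℕ // ∑ i : ι', e i.1 * t i ≤ k} := by
    intro k
    have ext0 : ∀ (t : ι' → ℕ) (i : ι) (h : ¬ (i = i0)),
        (fun i => if h : i = i0 then k - ∑ j : ι', e j.1 * t j else t ⟨i, h⟩) i = t ⟨i, h⟩ :=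
      fun t i h => dif_neg h
    refine Nat.card_congr ⟨fun s => ⟨fun i => s.1 i.1, ?_⟩,
      fun t => ⟨fun i => if h : i = i0 then k - ∑ j : ι', e j.1 * t.1 j else t.1 ⟨i, h⟩, ?_⟩,
      ?_, ?_⟩
    · show ∑ i : ι', e i.1 * s.1 i.1 ≤ k
      have := s.2; rw [hsum] at this; omega
    · have ht := t.2
      rw [hsum, dif_pos rfl]
      have h2 : ∀ i : ι',
          (e i.1 * if h : i.1 = i0 then k - ∑ j : ι', e j.1 * t.1 j else t.1 ⟨i.1, h⟩)
          = e i.1 * t.1 i := by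
        intro i
        rw [dif_neg i.2]
      rw [Finset.sum_congr rfl (fun i _ => h2 i)]
      omega
    · intro s
      ext i
      dsimp only
      by_cases h : i = i0
      · rw [h, dif_pos rfl]
        have := s.2; rw [hsum] at this
        omega
      · rw [dif_neg h]
    · intro t
      ext i
      dsimp only
      rw [dif_neg i.2]
  -- step 2 : box decomposition
  have hUB : ∀ k : ℕ, Nat.card {y : ι' → ℕ // ∑ i : ι', e i.1 * (y i / e i.1) ≤ k}
      = Nat.card {t : ι' → ℕ // ∑ i : ι', e i.1 * t i ≤ k} * P' := by
    intro k
    have hdiv : ∀ (t r : ι' → ℕ), (∀ i, r i < e i.1) → ∀ i : ι',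
        (e i.1 * t i + r i) / e i.1 = t i := by
      intro t r hr i
      rw [Nat.mul_add_div (he i.1), Nat.div_eq_of_lt (hr i), add_zero]
    have eqv : {y : ι' → ℕ // ∑ i : ι', e i.1 * (y i / e i.1) ≤ k}
        ≃ {t : ι' → ℕ // ∑ i : ι', e i.1 * t i ≤ k} × (∀ i : ι', Fin (e i.1)) :=
      { toFun := fun y => (⟨fun i => y.1 i / e i.1, y.2⟩,
          fun i => ⟨y.1 i % e i.1, Nat.mod_lt _ (he i.1)⟩)
        invFun := fun p => ⟨fun i => e i.1 * p.1.1 i + (p.2 i).1, by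
          have hp := p.1.2
          have h1 : ∀ i : ι', e i.1 * ((e i.1 * p.1.1 i + (p.2 i).1) / e i.1)
              = e i.1 * p.1.1 i := fun i => by
            rw [hdiv p.1.1 (fun i => (p.2 i).1) (fun i => (p.2 i).2) i]
          calc ∑ i : ι', e i.1 * ((e i.1 * p.1.1 i + (p.2 i).1) / e i.1)
              = ∑ i : ι', e i.1 * p.1.1 i := Finset.sum_congr rfl fun i _ => h1 i
            _ ≤ k := hp⟩
        left_inv := fun y => by
          ext i
          dsimp only
          exact Nat.div_add_mod (y.1 i) (e i.1)
        right_inv := fun p => by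
          refine Prod.ext ?_ ?_
          · apply Subtype.ext
            funext i
            dsimp only
            exact hdiv p.1.1 (fun i => (p.2 i).1) (fun i => (p.2 i).2) i
          · funext i
            apply Fin.ext
            dsimp only
            rw [Nat.mul_add_mod, Nat.mod_eq_of_lt (p.2 i).2] }
    rw [Nat.card_congr eqv, Nat.card_prod]
    congr 1
    rw [Nat.card_pi]
    simp [hP']
  -- step 3 : sandwich bounds
  have hcount : ∀ N : ℕ, Nat.card {y : ι' → ℕ // ∑ i : ι', y i ≤ N} = (N + d).choose d :=
    fun N => ncard_sum_le ι' N
  have hptle : ∀ (y : ι' → ℕ) (i : ι'), e i.1 * (y i / e i.1) ≤ y i := by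
    intro y i
    rw [mul_comm]
    exact Nat.div_mul_le_self _ _
  have hfin0 : ∀ N : ℕ, Finite {y : ι' → ℕ // ∑ i : ι', y i ≤ N} := fun N => finite_sum_le N
  have hincl : ∀ (k : ℕ) (y : ι' → ℕ), (∑ i : ι', e i.1 * (y i / e i.1) ≤ k) →
      ∑ i : ι', y i ≤ k + E := by
    intro k y hy
    have h1 : ∀ i : ι', y i ≤ e i.1 * (y i / e i.1) + (e i.1 - 1) := by
      intro i
      have h2 := Nat.div_add_mod (y i) (e i.1)
      have h3 := Nat.mod_lt (y i) (he i.1)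
      omega
    calc ∑ i : ι', y i ≤ ∑ i : ι', (e i.1 * (y i / e i.1) + (e i.1 - 1)) :=
          Finset.sum_le_sum fun i _ => h1 i
      _ = (∑ i : ι', e i.1 * (y i / e i.1)) + E := by rw [Finset.sum_add_distrib]
      _ ≤ k + E := by omega
  have hfinU : ∀ k : ℕ, Finite {y : ι' → ℕ // ∑ i : ι', e i.1 * (y i / e i.1) ≤ k} := by
    intro k
    have := hfin0 (k + E)
    exact Finite.of_injective
      (fun y => (⟨y.1, hincl k y.1 y.2⟩ : {y : ι' → ℕ // ∑ i : ι', y i ≤ k + E}))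
      (by
        intro a b hab
        apply Subtype.ext
        have := congrArg Subtype.val hab
        simpa using this)
  have hlow : ∀ k : ℕ, (k + d).choose d
      ≤ Nat.card {y : ι' → ℕ // ∑ i : ι', e i.1 * (y i / e i.1) ≤ k} := by
    intro k
    rw [← hcount k]
    have := hfinU k
    refine Nat.card_le_card_of_injective
      (fun y => ⟨y.1, le_trans (Finset.sum_le_sum fun i _ => hptle y.1 i) y.2⟩)
      (by
        intro a b hab
        apply Subtype.ext
        have := congrArg Subtype.val hab
        simpa using this)
  have hup : ∀ k : ℕ, Nat.card {y : ι' → ℕ // ∑ i : ι', e i.1 * (y i / e i.1) ≤ k}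
      ≤ (k + (E + d)).choose d := by
    intro k
    have h1 : (k + E + d).choose d = (k + (E + d)).choose d := by rw [add_assoc]
    rw [← h1, ← hcount (k + E)]
    have := hfin0 (k + E)
    exact Nat.card_le_card_of_injective
      (fun y => ⟨y.1, hincl k y.1 y.2⟩)
      (by
        intro a b hab
        apply Subtype.ext
        have := congrArg Subtype.val hab
        simpa using this)
  -- assemble
  have key : ∀ k : ℕ, (Nat.card {s : ι → ℕ // ∑ i, e i * s i = k}) * P'
      = Nat.card {y : ι' → ℕ // ∑ i : ι', e i.1 * (y i / e i.1) ≤ k} := by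
    intro k
    rw [hFB k, ← hUB k]
  have main : Tendsto (fun k : ℕ =>
      ((Nat.card {y : ι' → ℕ // ∑ i : ι', e i.1 * (y i / e i.1) ≤ k} : ℝ)
        * (Nat.factorial d)) / (k:ℝ) ^ d) atTop (nhds 1) := by
    refine tendsto_of_tendsto_of_tendsto_of_le_of_le' (choose_asymp d d le_rfl)
      (choose_asymp (E + d) d (by omega)) ?_ ?_
    · filter_upwards [eventually_ge_atTop 1] with k hk
      have hb : ((k + d).choose d : ℝ) ≤
          (Nat.card {y : ι' → ℕ // ∑ i : ι', e i.1 * (y i / e i.1) ≤ k} : ℝ) :=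
        Nat.cast_le.mpr (hlow k)
      gcongr
    · filter_upwards [eventually_ge_atTop 1] with k hk
      have hb : (Nat.card {y : ι' → ℕ // ∑ i : ι', e i.1 * (y i / e i.1) ≤ k} : ℝ)
          ≤ ((k + (E + d)).choose d : ℝ) :=
        Nat.cast_le.mpr (hup k)
      gcongr
  refine main.congr ?_
  intro k
  rw [hcard, hProd]
  have hcast : (Nat.card {y : ι' → ℕ // ∑ i : ι', e i.1 * (y i / e i.1) ≤ k} : ℝ)
      = (Nat.card {s : ι → ℕ // ∑ i, e i * s i = k} : ℝ) * (P' : ℝ) := by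
    exact_mod_cast congrArg (Nat.cast (R := ℝ)) (key k).symm
  rw [hcast]
  ring

end


namespace HollowMonge

abbrev MP (n : ℕ) : Type := {pq : Fin n × Fin n // pq.1 ≤ pq.2 ∧ (pq.2 : ℕ) + 1 < n}

variable {n : ℕ}

def wt (x : MP n) : ℕ := ((x.1.1 : ℕ) + 1) * (n - 1 - (x.1.2 : ℕ))

def sep (x : MP n) (i j : Fin n) : Prop :=
  ((i:ℕ) ≤ (x.1.1:ℕ) ∧ (x.1.2:ℕ) < (j:ℕ)) ∨ ((j:ℕ) ≤ (x.1.1:ℕ) ∧ (x.1.2:ℕ) < (i:ℕ))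

instance (x : MP n) (i j : Fin n) : Decidable (sep x i j) := by unfold sep; infer_instance

lemma val_le (x : MP n) : (x.1.1 : ℕ) ≤ (x.1.2 : ℕ) := x.2.1

def qs (x : MP n) : Fin n := ⟨(x.1.2 : ℕ) + 1, x.2.2⟩

def ps (x : MP n) : Fin n := ⟨(x.1.1 : ℕ) + 1, lt_of_le_of_lt (Nat.succ_le_succ (val_le x)) x.2.2⟩

@[simp] lemma qs_val (x : MP n) : ((qs x : Fin n) : ℕ) = (x.1.2 : ℕ) + 1 := rfl
@[simp] lemma ps_val (x : MP n) : ((ps x : Fin n) : ℕ) = (x.1.1 : ℕ) + 1 := rfl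

def Psi (s : MP n → ℕ) : Matrix (Fin n) (Fin n) ℕ :=
  Matrix.of fun i j => ∑ x : MP n, if sep x i j then s x else 0

lemma Psi_apply (s : MP n → ℕ) (i j : Fin n) :
    Psi s i j = ∑ x : MP n, if sep x i j then s x else 0 := rfl

lemma eq_iff_vals (x y : MP n) :
    y = x ↔ ((y.1.1:ℕ) = (x.1.1:ℕ) ∧ (y.1.2:ℕ) = (x.1.2:ℕ)) := by
  rw [Subtype.ext_iff, Prod.ext_iff, Fin.ext_iff, Fin.ext_iff]

lemma sum_point (s : MP n → ℕ) (x : MP n) :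
    (∑ y : MP n, if ((y.1.1:ℕ) = (x.1.1:ℕ) ∧ (y.1.2:ℕ) = (x.1.2:ℕ)) then s y else 0) = s x := by
  rw [Finset.sum_congr rfl (fun y _ => if_congr (eq_iff_vals x y).symm rfl rfl),
    Finset.sum_ite_eq' univ x s]
  simp

lemma Psi_symm (s : MP n → ℕ) : (Psi s).IsSymm := by
  apply Matrix.IsSymm.ext
  intro i j
  rw [Psi_apply, Psi_apply]
  exact Finset.sum_congr rfl fun x _ => if_congr (by unfold sep; tauto) rfl rfl

lemma Psi_hollow (s : MP n → ℕ) (i : Fin n) : Psi s i i = 0 := by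
  rw [Psi_apply]
  refine Finset.sum_eq_zero fun x _ => ?_
  rw [if_neg]
  have := val_le x
  unfold sep
  omega

lemma Psi_monge (s : MP n → ℕ) : IsMongeNat (Psi s) := by
  intro i I j J hiI hjJ
  rw [Fin.lt_def] at hiI hjJ
  simp only [Psi_apply, ← Finset.sum_add_distrib]
  refine Finset.sum_le_sum fun x _ => ?_
  have := val_le x
  unfold sep
  grind

lemma card_le_count (p : Fin n) : (univ.filter (fun i : Fin n => (i:ℕ) ≤ (p:ℕ))).card = (p:ℕ) + 1 := by
  have h : univ.filter (fun i : Fin n => (i:ℕ) ≤ (p:ℕ)) = Finset.Iic p := by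
    ext i
    simp only [Finset.mem_filter, Finset.mem_univ, true_and, Finset.mem_Iic, Fin.le_def]
  rw [h, Fin.card_Iic]

lemma card_gt_count (q : Fin n) : (univ.filter (fun j : Fin n => (q:ℕ) < (j:ℕ))).card = n - 1 - (q:ℕ) := by
  have h : univ.filter (fun j : Fin n => (q:ℕ) < (j:ℕ)) = Finset.Ioi q := by
    ext j
    simp only [Finset.mem_filter, Finset.mem_univ, true_and, Finset.mem_Ioi, Fin.lt_def]
  rw [h, Fin.card_Ioi]

lemma sum_ite_count {P : Fin n → Prop} [DecidablePred P] (c : ℕ) :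
    (∑ i : Fin n, if P i then c else 0) = (univ.filter P).card * c := by
  rw [← Finset.sum_filter, Finset.sum_const, smul_eq_mul]

lemma Psi_entry_sum (s : MP n → ℕ) :
    ∑ i, ∑ j, Psi s i j = 2 * ∑ x : MP n, wt x * s x := by
  simp only [Psi_apply]
  rw [Finset.sum_congr rfl fun i (_ : i ∈ univ) => Finset.sum_comm, Finset.sum_comm]
  rw [Finset.mul_sum]
  refine Finset.sum_congr rfl fun x _ => ?_
  have hx := val_le x
  have key : ∀ i j : Fin n, (if sep x i j then s x else 0)
      = (if (i:ℕ) ≤ (x.1.1:ℕ) ∧ (x.1.2:ℕ) < (j:ℕ) then s x else 0)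
        + (if (j:ℕ) ≤ (x.1.1:ℕ) ∧ (x.1.2:ℕ) < (i:ℕ) then s x else 0) := by
    intro i j
    unfold sep
    grind
  rw [Finset.sum_congr rfl fun i (_ : i ∈ univ) => Finset.sum_congr rfl fun j (_ : j ∈ univ) => key i j]
  simp only [Finset.sum_add_distrib]
  have h1 : ∀ (a b : Fin n → Prop) (_ : DecidablePred a) (_ : DecidablePred b),
      (∑ i, ∑ j, if a i ∧ b j then s x else 0)
        = (univ.filter a).card * ((univ.filter b).card * s x) := by
    intro a b ha hb
    have : ∀ i, (∑ j, if a i ∧ b j then s x else 0) = if a i then ((univ.filter b).card * s x) else 0 := by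
      intro i
      by_cases h : a i
      · simp [h, sum_ite_count]
      · simp [h]
    rw [Finset.sum_congr rfl fun i _ => this i, sum_ite_count]
  rw [h1 _ _ (fun _ => inferInstance) (fun _ => inferInstance), Finset.sum_comm,
    h1 _ _ (fun _ => inferInstance) (fun _ => inferInstance),
    card_le_count, card_gt_count]
  unfold wt
  ring

end HollowMonge

namespace HollowMonge
variable {n : ℕ}

lemma Psi_diag (s : MP n → ℕ) (x : MP n) (hx : (x.1.1:ℕ) = (x.1.2:ℕ)) :
    Psi s x.1.1 (qs x) = s x := by
  rw [Psi_apply, ← sum_point s x]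
  refine Finset.sum_congr rfl fun y _ => if_congr ?_ rfl rfl
  have hy := val_le y
  unfold sep
  simp only [qs_val]
  omega

lemma Psi_rec (s : MP n → ℕ) (x : MP n) (hx : (x.1.1:ℕ) < (x.1.2:ℕ)) :
    Psi s x.1.1 x.1.2 + Psi s (ps x) (qs x) + s x
      = Psi s x.1.1 (qs x) + Psi s (ps x) x.1.2 := by
  simp only [Psi_apply]
  rw [← sum_point s x, ← Finset.sum_add_distrib, ← Finset.sum_add_distrib,
    ← Finset.sum_add_distrib]
  refine Finset.sum_congr rfl fun y _ => ?_
  have hy := val_le y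
  unfold sep
  simp only [qs_val, ps_val]
  grind

def Phi (C : Matrix (Fin n) (Fin n) ℕ) (x : MP n) : ℕ :=
  if (x.1.1:ℕ) = (x.1.2:ℕ) then C x.1.1 (qs x)
  else (C x.1.1 (qs x) + C (ps x) x.1.2) - (C x.1.1 x.1.2 + C (ps x) (qs x))

lemma Phi_Psi (s : MP n → ℕ) : Phi (Psi s) = s := by
  funext x
  unfold Phi
  rcases Nat.lt_or_ge (x.1.1:ℕ) (x.1.2:ℕ) with h | h
  · rw [if_neg (by omega)]
    have := Psi_rec s x h
    omega
  · have heq : (x.1.1:ℕ) = (x.1.2:ℕ) := le_antisymm (val_le x) h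
    rw [if_pos heq, Psi_diag s x heq]

lemma Psi_Phi (C : Matrix (Fin n) (Fin n) ℕ) (hsymm : C.IsSymm) (hdiag : ∀ i, C i i = 0)
    (hmonge : IsMongeNat C) : Psi (Phi C) = C := by
  have key : ∀ d : ℕ, ∀ i j : Fin n, (j:ℕ) = (i:ℕ) + d → Psi (Phi C) i j = C i j := by
    intro d
    induction d using Nat.strong_induction_on with
    | _ d ih =>
      intro i j hij
      have hjn := j.isLt
      match d, hij, ih with
      | 0, hij, _ =>
        have : i = j := Fin.ext (by omega)
        rw [this, Psi_hollow, hdiag]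
      | 1, hij, _ =>
        have hin : (i:ℕ) + 1 < n := by omega
        set x : MP n := ⟨(i, i), ⟨le_refl _, hin⟩⟩ with hxdef
        have hx2' : x.1.2 = i := rfl
        have hq : qs x = j := by
          apply Fin.ext
          rw [qs_val, hx2']
          omega
        have h1 : Psi (Phi C) i j = Phi C x := by
          rw [← hq]
          exact Psi_diag (Phi C) x rfl
        rw [h1]
        unfold Phi
        rw [if_pos rfl, hq]
      | (e+2), hij, ih =>
        set d := e + 2 with hddef
        have hq'lt : (i:ℕ) + d - 1 < n := by omega
        set q' : Fin n := ⟨(i:ℕ) + d - 1, hq'lt⟩ with hq'def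
        have hq'val : (q' : ℕ) = (i:ℕ) + d - 1 := rfl
        have hle : i ≤ q' := by
          rw [Fin.le_def, hq'val]
          omega
        have hx2 : (q':ℕ) + 1 < n := by omega
        set x : MP n := ⟨(i, q'), ⟨hle, hx2⟩⟩ with hxdef
        have hx1 : x.1.1 = i := rfl
        have hx2' : x.1.2 = q' := rfl
        have hpsval : ((ps x : Fin n) : ℕ) = (i:ℕ) + 1 := rfl
        have hq : qs x = j := by
          apply Fin.ext
          rw [qs_val, hx2', hq'val]
          omega
        have hlt : (x.1.1:ℕ) < (x.1.2:ℕ) := by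
          rw [hx1, hx2', hq'val]
          omega
        have hrec := Psi_rec (Phi C) x hlt
        rw [hq, hx1, hx2'] at hrec
        have hiI : i < ps x := by
          rw [Fin.lt_def, hpsval]
          omega
        have hjJ : q' < j := by
          rw [Fin.lt_def, hq'val]
          omega
        have hmg := hmonge i (ps x) q' j hiI hjJ
        have hphi : Phi C x + (C i q' + C (ps x) j) = C i j + C (ps x) q' := by
          unfold Phi
          rw [hx1, hx2', hq]
          rw [if_neg (by rw [hq'val]; omega)]
          omega
        have e1 : Psi (Phi C) i q' = C i q' := ih (d-1) (by omega) i q' (by rw [hq'val]; omega)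
        have e2 : Psi (Phi C) (ps x) j = C (ps x) j :=
          ih (d-1) (by omega) (ps x) j (by rw [hpsval]; omega)
        have e3 : Psi (Phi C) (ps x) q' = C (ps x) q' :=
          ih (d-2) (by omega) (ps x) q' (by rw [hq'val, hpsval]; omega)
        omega
  apply Matrix.ext
  intro i j
  rcases lt_trichotomy (i:ℕ) (j:ℕ) with h | h | h
  · exact key ((j:ℕ) - (i:ℕ)) i j (by omega)
  · have : i = j := Fin.ext h
    rw [this, Psi_hollow, hdiag]
  · have h1 : Psi (Phi C) j i = C j i := key ((i:ℕ) - (j:ℕ)) j i (by omega)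
    rw [← (Psi_symm (Phi C)).apply i j, ← hsymm.apply i j]
    exact h1

end HollowMonge

namespace HollowMonge
variable {n : ℕ}

lemma HMk_ncard (k : ℕ) :
    (HMk n k).ncard = Nat.card {s : MP n → ℕ // ∑ x : MP n, wt x * s x = k} := by
  rw [← Nat.card_coe_set_eq]
  refine Nat.card_congr (Equiv.symm ⟨fun s => ⟨Psi s.1, ?_⟩, fun C => ⟨Phi C.1, ?_⟩, ?_, ?_⟩)
  · refine ⟨Psi_symm s.1, Psi_hollow s.1, Psi_monge s.1, ?_⟩
    rw [Psi_entry_sum, s.2]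
  · obtain ⟨hsymm, hdiag, hmonge, hsum⟩ := C.2
    have h1 := Psi_entry_sum (Phi C.1)
    rw [Psi_Phi C.1 hsymm hdiag hmonge, hsum] at h1
    omega
  · intro s
    exact Subtype.ext (Phi_Psi s.1)
  · intro C
    obtain ⟨hsymm, hdiag, hmonge, hsum⟩ := C.2
    exact Subtype.ext (Psi_Phi C.1 hsymm hdiag hmonge)

end HollowMonge

lemma sf_eq_prod_pow (N : ℕ) : sf N = ∏ p ∈ Finset.range N, (p+1)^(N-p) := by
  induction N with
  | zero => simp [sf]
  | succ N ih =>
    have hsf : sf (N+1) = sf N * (N+1).factorial := by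
      unfold sf
      rw [Finset.prod_Icc_succ_top (by omega)]
    rw [hsf, Finset.prod_range_succ]
    have h1 : ∀ p ∈ Finset.range N, (p+1)^(N+1-p) = (p+1)^(N-p) * (p+1) := by
      intro p hp
      rw [Finset.mem_range] at hp
      rw [← pow_succ]
      congr 1
      omega
    rw [Finset.prod_congr rfl h1, Finset.prod_mul_distrib, ← ih,
      Finset.prod_range_add_one_eq_factorial]
    have : (N+1).factorial = N.factorial * (N+1) := by
      rw [Nat.factorial_succ]; ring
    have h9 : N + 1 - N = 1 := by omega
    rw [this, h9, pow_one]
    ring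

namespace HollowMonge
variable {n : ℕ}

lemma wt_pos (x : MP n) : 0 < wt x := by
  have h2 := x.2.2
  unfold wt
  have h3 : 0 < n - 1 - (x.1.2:ℕ) := by omega
  positivity

def pt0 (hn : 2 ≤ n) : MP n :=
  ⟨(⟨0, by omega⟩, ⟨n-2, by omega⟩), ⟨by rw [Fin.le_def]; dsimp only; omega,
    by dsimp only; omega⟩⟩

lemma wt_pt0 (hn : 2 ≤ n) : wt (pt0 hn) = 1 := by
  unfold wt pt0
  dsimp only
  omega

lemma card_MP (hn : 2 ≤ n) : Fintype.card (MP n) = n * (n-1) / 2 := by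
  rw [Fintype.card_subtype, Finset.card_filter, Fintype.sum_prod_type, Finset.sum_comm]
  have h1 : ∀ q : Fin n, (∑ p : Fin n, if (p : Fin n) ≤ q ∧ (q:ℕ)+1 < n then 1 else 0)
      = if (q:ℕ)+1 < n then (q:ℕ)+1 else 0 := by
    intro q
    by_cases hq : (q:ℕ)+1 < n
    · rw [if_pos hq]
      have : ∀ p : Fin n, (if (p : Fin n) ≤ q ∧ (q:ℕ)+1 < n then (1:ℕ) else 0)
          = if (p:ℕ) ≤ (q:ℕ) then 1 else 0 := by
        intro p
        refine if_congr ?_ rfl rfl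
        rw [and_iff_left hq, Fin.le_def]
      rw [Finset.sum_congr rfl fun p _ => this p, sum_ite_count, card_le_count, mul_one]
    · rw [if_neg hq]
      refine Finset.sum_eq_zero fun p _ => ?_
      rw [if_neg (by tauto)]
  rw [Finset.sum_congr rfl fun q _ => h1 q,
    Fin.sum_univ_eq_sum_range (fun t => if t+1 < n then t+1 else 0)]
  obtain ⟨m, rfl⟩ : ∃ m, n = m + 1 := ⟨n-1, by omega⟩
  rw [Finset.sum_range_succ, if_neg (by omega), add_zero]
  have h2 : ∀ t ∈ Finset.range m, (if t+1 < m+1 then t+1 else 0) = t+1 := by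
    intro t ht
    rw [Finset.mem_range] at ht
    rw [if_pos (by omega)]
  rw [Finset.sum_congr rfl h2]
  have h3 := Finset.sum_range_succ' (fun t => t) m
  have h4 := Finset.sum_range_id (m+1)
  omega

lemma card_between (p : Fin n) :
    (univ.filter fun q : Fin n => p ≤ q ∧ (q:ℕ)+1 < n).card = n - 1 - (p:ℕ) := by
  have hn : 0 < n := p.pos
  have h : (univ.filter fun q : Fin n => p ≤ q ∧ (q:ℕ)+1 < n)
      = Finset.Ico p ⟨n-1, by omega⟩ := by
    ext q
    simp only [Finset.mem_filter, Finset.mem_univ, true_and, Finset.mem_Ico, Fin.le_def,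
      Fin.lt_def]
    omega
  rw [h, Fin.card_Ico]

lemma prod_wt (hn : 2 ≤ n) : (∏ x : MP n, wt x) = sf (n-1) ^ 2 := by
  have hsub : (∏ x : MP n, wt x)
      = ∏ pq ∈ univ.filter (fun pq : Fin n × Fin n => pq.1 ≤ pq.2 ∧ (pq.2:ℕ)+1 < n),
          ((pq.1:ℕ)+1) * (n - 1 - (pq.2:ℕ)) := by
    rw [Finset.prod_subtype (p := fun pq : Fin n × Fin n => pq.1 ≤ pq.2 ∧ (pq.2:ℕ)+1 < n)
      (univ.filter (fun pq : Fin n × Fin n => pq.1 ≤ pq.2 ∧ (pq.2:ℕ)+1 < n))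
      (fun pq => by simp) (fun pq => ((pq.1:ℕ)+1) * (n - 1 - (pq.2:ℕ)))]
    rfl
  rw [hsub, Finset.prod_filter, Fintype.prod_prod_type]
  have hsplit : ∀ (p q : Fin n),
      (if (p : Fin n) ≤ q ∧ (q:ℕ)+1 < n then ((p:ℕ)+1) * (n - 1 - (q:ℕ)) else 1)
      = (if (p : Fin n) ≤ q ∧ (q:ℕ)+1 < n then ((p:ℕ)+1) else 1)
        * (if (p : Fin n) ≤ q ∧ (q:ℕ)+1 < n then (n - 1 - (q:ℕ)) else 1) := by
    intro p q
    split_ifs <;> simp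
  rw [Finset.prod_congr rfl fun p _ => Finset.prod_congr rfl fun q _ => hsplit p q]
  simp only [Finset.prod_mul_distrib]
  obtain ⟨m, hm⟩ : ∃ m, n = m + 1 := ⟨n-1, by omega⟩
  have hA : (∏ p : Fin n, ∏ q : Fin n,
      (if (p : Fin n) ≤ q ∧ (q:ℕ)+1 < n then ((p:ℕ)+1) else 1)) = sf (n-1) := by
    have hinner : ∀ p : Fin n, (∏ q : Fin n,
        (if (p : Fin n) ≤ q ∧ (q:ℕ)+1 < n then ((p:ℕ)+1) else 1))
        = ((p:ℕ)+1) ^ (n - 1 - (p:ℕ)) := by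
      intro p
      rw [← Finset.prod_filter, Finset.prod_const, card_between]
    rw [Finset.prod_congr rfl fun p _ => hinner p,
      Fin.prod_univ_eq_prod_range (fun t => (t+1) ^ (n-1-t))]
    subst hm
    rw [Finset.prod_range_succ]
    simp only [Nat.add_sub_cancel]
    rw [Nat.sub_self, pow_zero, mul_one, sf_eq_prod_pow]
  have hB : (∏ p : Fin n, ∏ q : Fin n,
      (if (p : Fin n) ≤ q ∧ (q:ℕ)+1 < n then (n - 1 - (q:ℕ)) else 1)) = sf (n-1) := by
    rw [Finset.prod_comm]
    have hinner : ∀ q : Fin n, (∏ p : Fin n,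
        (if (p : Fin n) ≤ q ∧ (q:ℕ)+1 < n then (n - 1 - (q:ℕ)) else 1))
        = if (q:ℕ)+1 < n then (n - 1 - (q:ℕ)) ^ ((q:ℕ)+1) else 1 := by
      intro q
      by_cases hq : (q:ℕ)+1 < n
      · rw [if_pos hq]
        have h5 : ∀ p : Fin n, (if (p : Fin n) ≤ q ∧ (q:ℕ)+1 < n then (n - 1 - (q:ℕ)) else 1)
            = if (p:ℕ) ≤ (q:ℕ) then (n - 1 - (q:ℕ)) else 1 := by
          intro p
          refine if_congr ?_ rfl rfl
          rw [and_iff_left hq, Fin.le_def]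
        rw [Finset.prod_congr rfl fun p _ => h5 p, ← Finset.prod_filter, Finset.prod_const,
          card_le_count]
      · rw [if_neg hq]
        refine Finset.prod_eq_one fun p _ => ?_
        rw [if_neg (by tauto)]
    rw [Finset.prod_congr rfl fun q _ => hinner q,
      Fin.prod_univ_eq_prod_range (fun t => if t+1 < n then (n-1-t)^(t+1) else 1)]
    subst hm
    rw [Finset.prod_range_succ, if_neg (by omega), mul_one]
    have h6 : ∀ t ∈ Finset.range m, (if t+1 < m+1 then (m+1-1-t)^(t+1) else 1)
        = (fun j => (m-j)^(j+1)) t := by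
      intro t ht
      rw [Finset.mem_range] at ht
      rw [if_pos (by omega)]
      simp
    rw [Finset.prod_congr rfl h6]
    have h7 := Finset.prod_range_reflect (fun j => (m-j)^(j+1)) m
    have h8 : ∀ j ∈ Finset.range m, (fun j => (m-j)^(j+1)) (m - 1 - j) = (j+1)^(m-j) := by
      intro j hj
      rw [Finset.mem_range] at hj
      simp only []
      have e1 : m - (m - 1 - j) = j + 1 := by omega
      have e2 : (m - 1 - j) + 1 = m - j := by omega
      rw [e1, e2]
    rw [← h7, Finset.prod_congr rfl h8, sf_eq_prod_pow]
    simp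
  rw [hA, hB, sq]

end HollowMonge

/-- With `m = n(n-1)/2`, we have `#HM_n^k(ℕ) ∼ k^(m-1) / ((m-1)! · sf(n-1)²)`
as `k → ∞`. -/
theorem hollow_symmetric_monge_count_asymptotic (n : ℕ) (hn : 2 ≤ n) :
    Tendsto
      (fun k : ℕ =>
        ((HMk n k).ncard : ℝ) * (Nat.factorial (n * (n - 1) / 2 - 1)) *
          ((sf (n - 1) : ℝ)) ^ 2 / (k : ℝ) ^ (n * (n - 1) / 2 - 1))
      atTop (nhds 1) := by
  classical
  have hmain := count_asymptotic (ι := HollowMonge.MP n) HollowMonge.wt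
    HollowMonge.wt_pos (HollowMonge.pt0 hn) (HollowMonge.wt_pt0 hn)
  have hcard := HollowMonge.card_MP hn
  have hprod := HollowMonge.prod_wt hn
  refine hmain.congr fun k => ?_
  rw [hcard, hprod, ← HollowMonge.HMk_ncard]
  push_cast
  ring
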